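/- arXiv:1105.1842 — 3 statements merged into one kernel-verified Lean document; each statement's English description precedes it below -/
import Mathlib

section
/- Let G and H be finite groups with |G| ≤ |H|, suppose G is not isomorphic to any subgroup of H, and let γ : G → H be any injective map. Then the number of pairs (x, y) ∈ G × G satisfying γ(x·y) = γ(x)·γ(y) is at most (7/9)|G|^2. -/
open Finset

private lemma big_fiber {G H : Type*} [Fintype G] [Nonempty G] [DecidableEq H]
    (v : G → H)
    (h : 5 * (Fintype.card G) ^ 2 <
      9 * ((univ ×ˢ univ).filter fun p : G × G => v p.1 = v p.2).card) :
    ∃ a : H, 2 * Fintype.card G < 3 * (univ.filter fun y => v y = a).card := by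
  classical
  set n := Fintype.card G with hn
  set E := (univ ×ˢ univ).filter fun p : G × G => v p.1 = v p.2 with hE
  have hdec : E.card = ∑ y : G, (univ.filter fun z => v z = v y).card := by
    rw [Finset.card_eq_sum_card_fiberwise (f := Prod.fst) (t := univ)
      (fun x _ => mem_univ _)]
    refine Finset.sum_congr rfl fun y _ => ?_
    refine Finset.card_bij' (fun p _ => p.2) (fun z _ => (y, z)) ?_ ?_ ?_ ?_
    · intro p hp
      simp only [hE, mem_filter, mem_product, mem_univ, true_and] at hp ⊢
      rw [← hp.2, hp.1]
    · intro z hz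
      simp only [mem_filter, mem_univ, true_and] at hz
      simp only [hE, mem_filter, mem_product, mem_univ, true_and]
      exact ⟨hz.symm, trivial⟩
    · intro p hp
      simp only [mem_filter] at hp
      exact Prod.ext hp.2.symm rfl
    · intro z _; rfl
  obtain ⟨y₀, -, hy₀⟩ := Finset.exists_max_image univ
    (fun y => (univ.filter fun z => v z = v y).card) univ_nonempty
  set m := (univ.filter fun z => v z = v y₀).card with hm
  refine ⟨v y₀, ?_⟩
  have hmn : m ≤ n := le_trans (Finset.card_filter_le _ _) (le_of_eq card_univ)
  have hEle : E.card ≤ n * m := by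
    rw [hdec]
    calc ∑ y : G, (univ.filter fun z => v z = v y).card
        ≤ ∑ _y : G, m := Finset.sum_le_sum fun y _ => hy₀ y (mem_univ y)
      _ = n * m := by rw [Finset.sum_const, card_univ, smul_eq_mul]
  set m' := n - m with hm'
  have hmm' : m + m' = n := by omega
  have hEle2 : E.card ≤ m * m + m' * m' := by
    rw [hdec, ← Finset.sum_filter_add_sum_filter_not univ (fun y => v y = v y₀)]
    have h1 : ∑ y ∈ univ.filter (fun y => v y = v y₀),
        (univ.filter fun z => v z = v y).card = m * m := by
      rw [Finset.sum_congr rfl (g := fun _ => m) (fun y hy => by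
        simp only [mem_filter] at hy
        simp only [hm, hy.2])]
      rw [Finset.sum_const, smul_eq_mul, ← hm]
    have h2 : ∑ y ∈ univ.filter (fun y => ¬ v y = v y₀),
        (univ.filter fun z => v z = v y).card ≤ m' * m' := by
      have hcardnot : (univ.filter (fun y => ¬ v y = v y₀)).card = m' := by
        have := Finset.card_filter_add_card_filter_not
          (s := (univ : Finset G)) (p := fun y => v y = v y₀)
        simp only [card_univ] at this
        omega
      calc ∑ y ∈ univ.filter (fun y => ¬ v y = v y₀),
            (univ.filter fun z => v z = v y).card
          ≤ ∑ _y ∈ univ.filter (fun y => ¬ v y = v y₀), m' := by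
            refine Finset.sum_le_sum fun y hy => ?_
            simp only [mem_filter] at hy
            have hsub : (univ.filter fun z => v z = v y) ⊆
                univ \ (univ.filter fun z => v z = v y₀) := by
              intro z hz
              simp only [mem_filter, mem_sdiff, mem_univ, true_and] at hz ⊢
              rw [hz]; exact hy.2
            have := Finset.card_le_card hsub
            rwa [Finset.card_sdiff_of_subset (Finset.filter_subset _ _), card_univ, ← hm] at this
        _ = m' * m' := by rw [Finset.sum_const, smul_eq_mul, hcardnot]
    omega
  -- Now conclude 2 * n < 3 * m
  by_contra hcon
  push_neg at hcon
  have hn0 : 0 < n := Fintype.card_pos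
  have h9m : 5 * n < 9 * m := by
    have h1 : 5 * n * n < 9 * m * n := by
      calc 5 * n * n = 5 * n ^ 2 := by ring
        _ < 9 * E.card := h
        _ ≤ 9 * (n * m) := by omega
        _ = 9 * m * n := by ring
    exact Nat.lt_of_mul_lt_mul_right h1
  have hA : 5 * n ^ 2 < 9 * (m * m) + 9 * (m' * m') := by
    calc 5 * n ^ 2 < 9 * E.card := h
      _ ≤ 9 * (m * m) + 9 * (m' * m') := by omega
  have h2m : m' ≤ 2 * m := by omega
  have h2m' : m ≤ 2 * m' := by omega
  have hZ : (5 : ℤ) * ((m : ℤ) + m') ^ 2 < 9 * (m : ℤ) * m + 9 * (m' : ℤ) * m' := by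
    have := hA
    have hnmm : (n : ℤ) = (m : ℤ) + (m' : ℤ) := by exact_mod_cast hmm'.symm
    push_cast at this
    rw [← hnmm]
    linarith
  have hz1 : (0 : ℤ) ≤ 2 * (m : ℤ) - m' := by
    have : (m' : ℤ) ≤ 2 * m := by exact_mod_cast h2m
    linarith
  have hz2 : (0 : ℤ) ≤ 2 * (m' : ℤ) - m := by
    have : (m : ℤ) ≤ 2 * m' := by exact_mod_cast h2m'
    linarith
  nlinarith [mul_nonneg hz1 hz2]

theorem non_embeddable_far_from_hom (G H : Type*) [Group G] [Group H] [Finite G] [Finite H]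
    (hcard : Nat.card G ≤ Nat.card H)
    (hiso : ∀ K : Subgroup H, ¬ Nonempty (G ≃* K))
    (γ : G → H) (hγ : Function.Injective γ) :
    9 * Nat.card {q : G × G // γ (q.1 * q.2) = γ q.1 * γ q.2} ≤ 7 * (Nat.card G) ^ 2 := by
  classical
  have : Fintype G := Fintype.ofFinite G
  set n := Fintype.card G with hn
  have hn0 : 0 < n := Fintype.card_pos
  have hncard : Nat.card G = n := Nat.card_eq_fintype_card
  by_contra hmain
  push_neg at hmain
  -- translate the subtype card to a finset card
  set S : Finset (G × G) := univ.filter (fun q : G × G => γ (q.1 * q.2) = γ q.1 * γ q.2)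
    with hS
  have hScard : Nat.card {q : G × G // γ (q.1 * q.2) = γ q.1 * γ q.2} = S.card := by
    rw [Nat.card_eq_fintype_card, hS]
    convert Fintype.card_subtype (fun q : G × G => γ (q.1 * q.2) = γ q.1 * γ q.2) using 2
  rw [hScard, hncard] at hmain
  set B : Finset (G × G) := univ.filter (fun q : G × G => ¬ γ (q.1 * q.2) = γ q.1 * γ q.2)
    with hB
  have hSB : S.card + B.card = n ^ 2 := by
    rw [hS, hB, Finset.card_filter_add_card_filter_not, card_univ,
      Fintype.card_prod, ← hn, sq]
  have hBsmall : 9 * B.card < 2 * n ^ 2 := by omega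
  -- the difference function
  set q : G → G → H := fun x y => (γ y)⁻¹ * γ (y * x) with hq
  -- Step 1: collision counting
  have hcol : ∀ x : G, 5 * n ^ 2 <
      9 * ((univ ×ˢ univ).filter fun p : G × G => q x p.1 = q x p.2).card := by
    intro x
    set NE := (univ ×ˢ univ).filter fun p : G × G => ¬ q x p.1 = q x p.2 with hNE
    have hsplit : ((univ ×ˢ univ).filter fun p : G × G => q x p.1 = q x p.2).card
        + NE.card = n ^ 2 := by
      rw [hNE, Finset.card_filter_add_card_filter_not]
      rw [Finset.card_product, card_univ, ← hn, sq]
    have hNEle : NE.card ≤ 2 * B.card := by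
      have hsub : NE ⊆ ((univ ×ˢ univ).filter fun p : G × G =>
          (p.2 * p.1⁻¹, p.1) ∈ B ∨ (p.2 * p.1⁻¹, p.1 * x) ∈ B) := by
        intro p hp
        simp only [hNE, mem_filter, mem_product, mem_univ, and_self, true_and] at hp ⊢
        by_contra hcontra
        push_neg at hcontra
        obtain ⟨h1, h2⟩ := hcontra
        simp only [hB, mem_filter, mem_univ, true_and, not_not] at h1 h2
        apply hp
        have e1 : γ (p.2 * p.1⁻¹ * p.1) = γ (p.2 * p.1⁻¹) * γ p.1 := h1
        have e2 : γ (p.2 * p.1⁻¹ * (p.1 * x)) = γ (p.2 * p.1⁻¹) * γ (p.1 * x) := h2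
        rw [inv_mul_cancel_right] at e1
        rw [show p.2 * p.1⁻¹ * (p.1 * x) = p.2 * x by group] at e2
        simp only [hq]
        rw [e1, e2]
        group
      calc NE.card ≤ _ := Finset.card_le_card hsub
        _ ≤ ((univ ×ˢ univ).filter fun p : G × G => (p.2 * p.1⁻¹, p.1) ∈ B).card
            + ((univ ×ˢ univ).filter fun p : G × G => (p.2 * p.1⁻¹, p.1 * x) ∈ B).card := by
            rw [Finset.filter_or]
            exact Finset.card_union_le _ _
        _ = B.card + B.card := by
            congr 1
            · refine Finset.card_nbij' (fun p => (p.2 * p.1⁻¹, p.1))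
                (fun p => (p.2, p.1 * p.2)) ?_ ?_ ?_ ?_
              · intro p hp
                simp only [mem_coe, mem_filter] at hp
                exact hp.2
              · intro p hp
                simp only [mem_filter, mem_product, mem_univ, and_self, true_and]
                simpa using hp
              · intro p hp
                simp only
                ext <;> simp [mul_assoc]
              · intro p hp
                simp only
                ext <;> simp [mul_assoc]
            · refine Finset.card_nbij' (fun p => (p.2 * p.1⁻¹, p.1 * x))
                (fun p => (p.2 * x⁻¹, p.1 * p.2 * x⁻¹)) ?_ ?_ ?_ ?_
              · intro p hp
                simp only [mem_coe, mem_filter] at hp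
                exact hp.2
              · intro p hp
                simp only [mem_coe, mem_filter, mem_product, mem_univ, and_self, true_and]
                have : p.1 * p.2 * x⁻¹ * (p.2 * x⁻¹)⁻¹ = p.1 := by group
                rw [this]
                have : p.2 * x⁻¹ * x = p.2 := by group
                rw [this]
                simpa using hp
              · intro p hp
                simp only
                ext
                · simp only; group
                · simp only; group
              · intro p hp
                simp only
                ext
                · simp only; group
                · simp only; group
        _ = 2 * B.card := by ring
    omega
  -- Step 2: for every x there is a strong majority value
  have hmaj : ∀ x : G, ∃ a : H, 2 * n < 3 * (univ.filter fun y => q x y = a).card := by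
    intro x
    exact big_fiber (v := q x) (by rw [← hn]; exact hcol x)
  -- define g by choice
  set g : G → H := fun x => Classical.choose (hmaj x) with hg
  have hgmaj : ∀ x : G, 2 * n < 3 * (univ.filter fun y => q x y = g x).card :=
    fun x => Classical.choose_spec (hmaj x)
  -- uniqueness of strong majority values
  have huniq : ∀ (x : G) (a : H), n < 3 * (univ.filter fun y => q x y = a).card →
      a = g x := by
    intro x a ha
    by_contra hne
    have hdisj : Disjoint (univ.filter fun y => q x y = a)
        (univ.filter fun y => q x y = g x) := by
      refine Finset.disjoint_filter_filter' _ _ ?_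
      intro p hp1 hp2 y hy
      exact absurd ((hp1 y hy).symm.trans (hp2 y hy)) hne
    have hcu := Finset.card_union_of_disjoint hdisj
    have hle : ((univ.filter fun y => q x y = a) ∪ (univ.filter fun y => q x y = g x)).card
        ≤ n := by
      rw [hn, ← card_univ]
      exact Finset.card_le_card (Finset.subset_univ _)
    rw [hcu] at hle
    have := hgmaj x
    omega
  -- Step 3: g is a homomorphism
  have ghom : ∀ x₁ x₂ : G, g (x₁ * x₂) = g x₁ * g x₂ := by
    intro x₁ x₂
    set A1 := (univ.filter fun y => q x₁ y = g x₁) with hA1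
    set A2 := (univ.filter fun y => q x₂ (y * x₁) = g x₂) with hA2
    set A3 := (univ.filter fun y => q (x₁ * x₂) y = g (x₁ * x₂)) with hA3
    have hA2card : 2 * n < 3 * A2.card := by
      have : A2.card = (univ.filter fun z => q x₂ z = g x₂).card := by
        refine Finset.card_nbij' (fun y => y * x₁) (fun z => z * x₁⁻¹) ?_ ?_ ?_ ?_
        · intro y hy
          simp only [hA2, mem_coe, mem_filter, mem_univ, true_and] at hy ⊢
          exact hy
        · intro z hz
          simp only [hA2, mem_coe, mem_filter, mem_univ, true_and] at hz ⊢
          rw [inv_mul_cancel_right]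
          exact hz
        · intro y _; simp
        · intro z _; simp
      rw [this]; exact hgmaj x₂
    have hex : ∃ y : G, y ∈ A1 ∧ y ∈ A2 ∧ y ∈ A3 := by
      by_contra hno
      push_neg at hno
      have hsub : (univ : Finset G) ⊆ (univ \ A1) ∪ (univ \ A2) ∪ (univ \ A3) := by
        intro y _
        simp only [Finset.mem_union, Finset.mem_sdiff, mem_univ, true_and]
        by_contra hc
        push_neg at hc
        exact hno y hc.1.1 hc.1.2 hc.2
      have hcard := Finset.card_le_card hsub
      have hle : ((univ \ A1) ∪ (univ \ A2) ∪ (univ \ A3)).card ≤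
          (univ \ A1).card + (univ \ A2).card + (univ \ A3).card :=
        le_trans (Finset.card_union_le _ _)
          (by exact Nat.add_le_add_right (Finset.card_union_le _ _) _)
      rw [card_univ, ← hn] at hcard
      have h1 := Finset.card_sdiff_of_subset (Finset.subset_univ A1)
      have h2 := Finset.card_sdiff_of_subset (Finset.subset_univ A2)
      have h3 := Finset.card_sdiff_of_subset (Finset.subset_univ A3)
      rw [card_univ, ← hn] at h1 h2 h3
      have hg1 := hgmaj x₁
      have hg3 := hgmaj (x₁ * x₂)
      have hb1 : A1.card ≤ n := le_trans (Finset.card_le_card (Finset.subset_univ A1))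
        (by rw [card_univ])
      have hb2 : A2.card ≤ n := le_trans (Finset.card_le_card (Finset.subset_univ A2))
        (by rw [card_univ])
      have hb3 : A3.card ≤ n := le_trans (Finset.card_le_card (Finset.subset_univ A3))
        (by rw [card_univ])
      rw [← hA1] at hg1
      rw [← hA3] at hg3
      omega
    obtain ⟨y, hy1, hy2, hy3⟩ := hex
    simp only [hA1, hA2, hA3, mem_filter, mem_univ, true_and, hq] at hy1 hy2 hy3
    rw [← hy1, ← hy2, ← hy3]
    rw [show y * (x₁ * x₂) = y * x₁ * x₂ by group]
    group
  -- the monoid hom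
  set φ : G →* H := MonoidHom.mk' g ghom with hφ
  -- Step 4: agreement set
  set A : Finset G := univ.filter
    (fun x => n < 3 * (univ.filter fun y => γ (y * x) = γ y * γ x).card) with hA
  have hagree : ∀ x ∈ A, g x = γ x := by
    intro x hx
    simp only [hA, mem_filter, mem_univ, true_and] at hx
    have hsub : (univ.filter fun y => γ (y * x) = γ y * γ x) ⊆
        (univ.filter fun y => q x y = γ x) := by
      intro y hy
      simp only [mem_filter, mem_univ, true_and, hq] at hy ⊢
      rw [hy]
      group
    have hle := Finset.card_le_card hsub
    exact (huniq x (γ x) (by omega)).symm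
  -- Step 5: A is large
  have hAcard : 2 * n < 3 * A.card := by
    -- column bad counts
    have hBdec : B.card = ∑ x : G,
        (univ.filter fun y => ¬ γ (y * x) = γ y * γ x).card := by
      rw [Finset.card_eq_sum_card_fiberwise (f := Prod.snd) (t := univ)
        (fun p _ => mem_univ _)]
      refine Finset.sum_congr rfl fun x _ => ?_
      refine Finset.card_bij' (fun p _ => p.1) (fun y _ => (y, x)) ?_ ?_ ?_ ?_
      · intro p hp
        simp only [hB, mem_filter, mem_univ, true_and] at hp ⊢
        rw [← hp.2]
        exact hp.1
      · intro y hy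
        simp only [mem_filter, mem_univ, true_and] at hy
        simp only [hB, mem_filter, mem_univ, true_and]
        exact ⟨hy, trivial⟩
      · intro p hp
        simp only [mem_filter] at hp
        exact Prod.ext rfl hp.2.symm
      · intro y _; rfl
    -- for x not in A, the bad column is large
    have hnotA : ∀ x ∈ univ \ A,
        2 * n ≤ 3 * (univ.filter fun y => ¬ γ (y * x) = γ y * γ x).card := by
      intro x hx
      simp only [Finset.mem_sdiff, hA, mem_filter, mem_univ, true_and, not_lt] at hx
      have := Finset.card_filter_add_card_filter_not
        (s := (univ : Finset G)) (p := fun y => γ (y * x) = γ y * γ x)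
      rw [card_univ, ← hn] at this
      omega
    have hsum : (univ \ A).card * (2 * n) ≤ 3 * B.card := by
      calc (univ \ A).card * (2 * n) = ∑ _x ∈ univ \ A, 2 * n := by
            rw [Finset.sum_const, smul_eq_mul]
        _ ≤ ∑ x ∈ univ \ A, 3 * (univ.filter fun y => ¬ γ (y * x) = γ y * γ x).card :=
            Finset.sum_le_sum hnotA
        _ ≤ ∑ x : G, 3 * (univ.filter fun y => ¬ γ (y * x) = γ y * γ x).card :=
            Finset.sum_le_sum_of_subset (Finset.sdiff_subset)
        _ = 3 * B.card := by rw [hBdec, Finset.mul_sum]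
    have hAcompl : (univ \ A).card = n - A.card := by
      rw [Finset.card_sdiff_of_subset (Finset.subset_univ A), card_univ]
    have hAn : A.card ≤ n := le_trans (Finset.card_le_card (Finset.subset_univ A))
      (le_of_eq card_univ)
    -- from 9 B < 2 n², get (n - A.card) * 2n * 3 ≤ 9 B < 2 n²
    by_contra hcon
    push_neg at hcon
    -- 3 * A.card ≤ 2n, so n - A.card ≥ n/3: (univ\A).card * 2n ≥ (n - A.card) * 2n
    have h1 : (n - A.card) * (2 * n) * 3 ≤ 9 * B.card := by
      rw [← hAcompl]; omega
    have h2 : 2 * n ^ 2 ≤ (n - A.card) * (2 * n) * 3 := by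
      have h3 : n ≤ 3 * (n - A.card) := by omega
      calc 2 * n ^ 2 = n * (2 * n) := by ring
        _ ≤ (3 * (n - A.card)) * (2 * n) := Nat.mul_le_mul_right _ h3
        _ = (n - A.card) * (2 * n) * 3 := by ring
    linarith [h1, h2, hBsmall]
  -- Step 6: the kernel of φ is trivial
  have hrange : 2 * n < 3 * Nat.card φ.range := by
    have hinj : Function.Injective (fun x : {y // y ∈ A} => φ x.1) := by
      intro a b hab
      simp only at hab
      have ha := hagree a.1 a.2
      have hb := hagree b.1 b.2
      have : γ a.1 = γ b.1 := by
        rw [← ha, ← hb]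
        exact hab
      exact Subtype.ext (hγ this)
    have hmaps : ∀ x : {y // y ∈ A}, φ x.1 ∈ φ.range := fun x => ⟨x.1, rfl⟩
    have hinj2 : Function.Injective
        (fun x : {y // y ∈ A} => (⟨φ x.1, hmaps x⟩ : φ.range)) := by
      intro a b hab
      exact hinj (congrArg Subtype.val hab)
    have hle := Nat.card_le_card_of_injective _ hinj2
    have hAc : Nat.card {y // y ∈ A} = A.card := by
      rw [Nat.card_eq_fintype_card, Fintype.card_coe]
    rw [hAc] at hle
    omega
  have hker : Nat.card φ.ker = 1 := by
    have hq1 : Nat.card (G ⧸ φ.ker) = Nat.card φ.range :=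
      Nat.card_congr (QuotientGroup.quotientKerEquivRange φ).toEquiv
    have hfull := Subgroup.card_eq_card_quotient_mul_card_subgroup φ.ker
    rw [hncard, hq1] at hfull
    have hkpos : 0 < Nat.card φ.ker := Nat.card_pos
    by_contra hk1
    have hk2 : 2 ≤ Nat.card φ.ker := by omega
    have : 2 * Nat.card φ.range ≤ n := by
      calc 2 * Nat.card φ.range ≤ Nat.card φ.ker * Nat.card φ.range :=
            Nat.mul_le_mul_right _ hk2
        _ = Nat.card φ.range * Nat.card φ.ker := mul_comm _ _
        _ = n := hfull.symm
    omega
  have hinjφ : Function.Injective φ := by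
    rw [← MonoidHom.ker_eq_bot_iff]
    exact Subgroup.card_eq_one.mp hker
  exact hiso φ.range ⟨MonoidHom.ofInjective hinjφ⟩
end

section
/- Let G be a finite group, (Γ, ∘) a magma with |Γ| = |G|, f : G → Γ a map, and 0 ≤ η < 1/120. If the number of pairs (x,y) ∈ G × G with f(xy) ≠ f(x) ∘ f(y) is at most η|G|^2, and for every nontrivial subgroup H of G there exist distinct x, y ∈ H such that |{u ∈ G : f(xu) = f(yu)}| ≤ |G|/2, then there is a binary operation ∗ on Γ making (Γ, ∗) a group isomorphic to G, with |{(α,β) ∈ Γ × Γ : α ∘ β ≠ α ∗ β}| ≤ 46η|G|^2. -/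
set_option linter.unusedSectionVars false

open Finset

section CloseOpAux

variable {G : Type*} {Γ : Type*} [Group G] [Fintype G] [DecidableEq G] [DecidableEq Γ]

/-- the set of bad pairs -/
def Pbad (op : Γ → Γ → Γ) (f : G → Γ) : Finset (G × G) :=
  univ.filter fun q => f (q.1 * q.2) ≠ op (f q.1) (f q.2)

/-- agreement count -/
def Nf (f : G → Γ) (a b : G) : ℕ := (univ.filter fun u => f (a * u) = f (b * u)).card

/-- row count of bad pairs -/
def ef (op : Γ → Γ → Γ) (f : G → Γ) (x : G) : ℕ :=
  (univ.filter fun y => (x, y) ∈ Pbad op f).card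

lemma Nf_le (f : G → Γ) (a b : G) : Nf f a b ≤ Fintype.card G :=
  (card_filter_le _ _).trans_eq (by simp)

lemma Nf_right_inv (f : G → Γ) (a b g : G) : Nf f (a * g) (b * g) = Nf f a b := by
  have e : {v : G // f (a * g * v) = f (b * g * v)} ≃ {u : G // f (a * u) = f (b * u)} :=
    Equiv.subtypeEquiv (Equiv.mulLeft g) (fun v => by simp [mul_assoc])
  have h1 : Nf f (a * g) (b * g) = Fintype.card {v : G // f (a * g * v) = f (b * g * v)} := by
    rw [Fintype.card_subtype]; rfl
  have h2 : Nf f a b = Fintype.card {u : G // f (a * u) = f (b * u)} := by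
    rw [Fintype.card_subtype]; rfl
  rw [h1, h2, Fintype.card_congr e]

lemma Nf_one_one (f : G → Γ) : Nf f 1 1 = Fintype.card G := by
  simp [Nf]

lemma Nf_triangle (f : G → Γ) (a b c : G) :
    Nf f a b + Nf f b c ≤ Nf f a c + Fintype.card G := by
  classical
  set s := univ.filter fun u => f (a * u) = f (b * u)
  set t := univ.filter fun u => f (b * u) = f (c * u)
  have hsub : s ∩ t ⊆ univ.filter fun u => f (a * u) = f (c * u) := by
    intro u hu
    simp only [s, t, mem_inter, mem_filter, mem_univ, true_and] at hu ⊢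
    exact hu.1.trans hu.2
  have h1 : (s ∩ t).card + (s ∪ t).card = s.card + t.card :=
    card_inter_add_card_union s t
  have h2 : (s ∩ t).card ≤ Nf f a c := card_le_card hsub
  have h3 : (s ∪ t).card ≤ Fintype.card G := by
    simpa using card_le_card (subset_univ (s ∪ t))
  have hs : s.card = Nf f a b := rfl
  have ht : t.card = Nf f b c := rfl
  omega

/-- double counting: summing a bijectively-reindexed membership count gives the card. -/
lemma sum_count (P : Finset (G × G)) (g : G → G → G × G)
    (hg : Function.Bijective fun z : G × G => g z.1 z.2) :
    ∑ w : G, (univ.filter fun u => g u w ∈ P).card = P.card := by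
  classical
  have h1 : ∑ w : G, (univ.filter fun u => g u w ∈ P).card
      = ∑ z : G × G, if g z.2 z.1 ∈ P then 1 else 0 := by
    rw [Fintype.sum_prod_type]
    exact Finset.sum_congr rfl fun w _ => by rw [card_filter]
  have h2 : (∑ z : G × G, if g z.2 z.1 ∈ P then 1 else 0)
      = (univ.filter fun z : G × G => g z.2 z.1 ∈ P).card := by
    rw [card_filter]
  have e : {z : G × G // g z.2 z.1 ∈ P} ≃ {q : G × G // q ∈ P} :=
    Equiv.subtypeEquiv ((Equiv.prodComm G G).trans (Equiv.ofBijective _ hg))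
      (fun z => Iff.rfl)
  have h3 : (univ.filter fun z : G × G => g z.2 z.1 ∈ P).card = P.card := by
    rw [← Fintype.card_subtype, Fintype.card_congr e, Fintype.card_coe]
  omega

lemma sum_ef (op : Γ → Γ → Γ) (f : G → Γ) :
    ∑ x : G, ef op f x = (Pbad op f).card := by
  classical
  have h1 : ∑ x : G, ef op f x = ∑ z : G × G, if z ∈ Pbad op f then 1 else 0 := by
    rw [Fintype.sum_prod_type]
    exact Finset.sum_congr rfl fun x _ => by rw [ef, card_filter]
  rw [h1, ← card_filter]
  simp

/-- key counting lemma -/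
lemma lemN (op : Γ → Γ → Γ) (f : G → Γ) (a b : G) :
    (Fintype.card G - Nf f a b) * Nf f a b ≤ 2 * (Pbad op f).card := by
  classical
  set P := Pbad op f with hP
  set Bad : Finset G := univ.filter fun w => f (a * w) ≠ f (b * w) with hBad
  have hBadcard : Bad.card = Fintype.card G - Nf f a b := by
    have : Bad = univ \ (univ.filter fun w => f (a * w) = f (b * w)) := by
      rw [hBad, filter_not]
    rw [this, card_sdiff_of_subset (filter_subset _ _)]
    simp [Nf]
  have key : ∀ w ∈ Bad, Nf f a b ≤
      (univ.filter fun u => (a * u, u⁻¹ * w) ∈ P).card +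
      (univ.filter fun u => (b * u, u⁻¹ * w) ∈ P).card := by
    intro w hw
    have hw' : f (a * w) ≠ f (b * w) := by
      simpa [hBad] using hw
    have hsub : (univ.filter fun u => f (a * u) = f (b * u)) ⊆
        (univ.filter fun u => (a * u, u⁻¹ * w) ∈ P) ∪
        (univ.filter fun u => (b * u, u⁻¹ * w) ∈ P) := by
      intro u hu
      simp only [mem_filter, mem_univ, true_and] at hu
      rw [mem_union]
      by_contra hcon
      push_neg at hcon
      simp only [mem_filter, mem_univ, true_and] at hcon
      have ha' : f (a * u * (u⁻¹ * w)) = op (f (a * u)) (f (u⁻¹ * w)) := by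
        have := hcon.1
        simp only [hP, Pbad, mem_filter, mem_univ, true_and, not_not] at this
        exact this
      have hb' : f (b * u * (u⁻¹ * w)) = op (f (b * u)) (f (u⁻¹ * w)) := by
        have := hcon.2
        simp only [hP, Pbad, mem_filter, mem_univ, true_and, not_not] at this
        exact this
      have hawe : a * u * (u⁻¹ * w) = a * w := by group
      have hbwe : b * u * (u⁻¹ * w) = b * w := by group
      apply hw'
      rw [← hawe, ← hbwe, ha', hb', hu]
    calc Nf f a b ≤ ((univ.filter fun u => (a * u, u⁻¹ * w) ∈ P) ∪
        (univ.filter fun u => (b * u, u⁻¹ * w) ∈ P)).card := card_le_card hsub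
      _ ≤ _ := card_union_le _ _
  have hsum : Bad.card * Nf f a b ≤
      ∑ w ∈ Bad, ((univ.filter fun u => (a * u, u⁻¹ * w) ∈ P).card +
        (univ.filter fun u => (b * u, u⁻¹ * w) ∈ P).card) := by
    calc Bad.card * Nf f a b = ∑ _w ∈ Bad, Nf f a b := by
          rw [Finset.sum_const, smul_eq_mul]
      _ ≤ _ := Finset.sum_le_sum key
  have hga : Function.Bijective fun z : G × G => ((a * z.1, z.1⁻¹ * z.2) : G × G) := by
    constructor
    · intro z₁ z₂ h
      simp only [Prod.mk.injEq] at h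
      have h1 : z₁.1 = z₂.1 := by
        have := h.1; exact mul_left_cancel this
      have h2 : z₁.2 = z₂.2 := by
        have := h.2; rw [h1] at this; exact mul_left_cancel this
      exact Prod.ext h1 h2
    · intro q
      refine ⟨(a⁻¹ * q.1, a⁻¹ * q.1 * q.2), ?_⟩
      have h1 : a * (a⁻¹ * q.1) = q.1 := by group
      have h2 : (a⁻¹ * q.1)⁻¹ * (a⁻¹ * q.1 * q.2) = q.2 := by group
      exact Prod.ext h1 h2
  have hgb : Function.Bijective fun z : G × G => ((b * z.1, z.1⁻¹ * z.2) : G × G) := by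
    constructor
    · intro z₁ z₂ h
      simp only [Prod.mk.injEq] at h
      have h1 : z₁.1 = z₂.1 := mul_left_cancel h.1
      have h2 : z₁.2 = z₂.2 := by
        have := h.2; rw [h1] at this; exact mul_left_cancel this
      exact Prod.ext h1 h2
    · intro q
      refine ⟨(b⁻¹ * q.1, b⁻¹ * q.1 * q.2), ?_⟩
      have h1 : b * (b⁻¹ * q.1) = q.1 := by group
      have h2 : (b⁻¹ * q.1)⁻¹ * (b⁻¹ * q.1 * q.2) = q.2 := by group
      exact Prod.ext h1 h2
  have hsa : ∑ w : G, (univ.filter fun u => (a * u, u⁻¹ * w) ∈ P).card = P.card :=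
    sum_count P (fun u w => (a * u, u⁻¹ * w)) hga
  have hsb : ∑ w : G, (univ.filter fun u => (b * u, u⁻¹ * w) ∈ P).card = P.card :=
    sum_count P (fun u w => (b * u, u⁻¹ * w)) hgb
  have hle : ∑ w ∈ Bad, ((univ.filter fun u => (a * u, u⁻¹ * w) ∈ P).card +
      (univ.filter fun u => (b * u, u⁻¹ * w) ∈ P).card) ≤ 2 * P.card := by
    rw [Finset.sum_add_distrib]
    have h1 : ∑ w ∈ Bad, (univ.filter fun u => (a * u, u⁻¹ * w) ∈ P).card ≤ P.card := by
      rw [← hsa]; exact Finset.sum_le_sum_of_subset (subset_univ _)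
    have h2 : ∑ w ∈ Bad, (univ.filter fun u => (b * u, u⁻¹ * w) ∈ P).card ≤ P.card := by
      rw [← hsb]; exact Finset.sum_le_sum_of_subset (subset_univ _)
    omega
  rw [← hBadcard]
  omega

/-- lower bound on agreement for colliding points -/
lemma Nf_ge (op : Γ → Γ → Γ) (f : G → Γ) (a b : G) (hfab : f a = f b) :
    Fintype.card G ≤ Nf f a b + ef op f a + ef op f b := by
  classical
  have hsub : (univ : Finset G) ⊆
      (univ.filter fun u => f (a * u) = f (b * u)) ∪
      ((univ.filter fun u => (a, u) ∈ Pbad op f) ∪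
       (univ.filter fun u => (b, u) ∈ Pbad op f)) := by
    intro u _
    rw [mem_union, mem_union]
    by_contra hcon
    push_neg at hcon
    obtain ⟨h1, h2, h3⟩ := hcon
    simp only [mem_filter, mem_univ, true_and] at h1 h2 h3
    simp only [Pbad, mem_filter, mem_univ, true_and, not_not] at h2 h3
    exact h1 (by rw [h2, h3, hfab])
  have := card_le_card hsub
  have h4 := card_union_le (univ.filter fun u => f (a * u) = f (b * u))
      ((univ.filter fun u => (a, u) ∈ Pbad op f) ∪ (univ.filter fun u => (b, u) ∈ Pbad op f))
  have h5 := card_union_le (univ.filter fun u => (a, u) ∈ Pbad op f)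
      (univ.filter fun u => (b, u) ∈ Pbad op f)
  simp only [card_univ] at this
  unfold Nf ef
  omega

lemma Nf_symm (f : G → Γ) (a b : G) : Nf f a b = Nf f b a := by
  unfold Nf
  congr 1
  ext u
  simp only [mem_filter, mem_univ, true_and]
  exact eq_comm

lemma nat_card_eq_Nf (f : G → Γ) (a b : G) :
    Nat.card {u : G // f (a * u) = f (b * u)} = Nf f a b := by
  rw [Nat.card_eq_fintype_card, Fintype.card_subtype]
  rfl

lemma nat_card_eq_Pbad (op : Γ → Γ → Γ) (f : G → Γ) :
    Nat.card {q : G × G // f (q.1 * q.2) ≠ op (f q.1) (f q.2)} = (Pbad op f).card := by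
  rw [Nat.card_eq_fintype_card, Fintype.card_subtype]
  rfl

lemma card_filter_mul_mem (B : Finset G) (x : G) :
    (univ.filter fun y => x * y ∈ B).card = B.card := by
  rw [← Fintype.card_subtype]
  have e : {y : G // x * y ∈ B} ≃ {z : G // z ∈ B} :=
    Equiv.subtypeEquiv (Equiv.mulLeft x) (fun y => Iff.rfl)
  exact (Fintype.card_congr e).trans (Fintype.card_coe B)

lemma card_filter_prod_mul (B : Finset G) :
    (univ.filter fun q : G × G => q.1 * q.2 ∈ B).card = Fintype.card G * B.card := by
  rw [card_filter, Fintype.sum_prod_type]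
  have h : ∀ x : G, (∑ y : G, if x * y ∈ B then 1 else 0) = B.card := fun x => by
    rw [← card_filter, card_filter_mul_mem]
  rw [Finset.sum_congr rfl (fun x _ => h x)]
  simp [card_univ, mul_comm]

end CloseOpAux
set_option maxHeartbeats 1000000 in
theorem close_operation_gives_group {G Γ : Type*} [Group G] [Finite G] [Finite Γ]
    (op : Γ → Γ → Γ) (hcard : Nat.card Γ = Nat.card G) (f : G → Γ)
    (η : ℝ) (hη0 : 0 ≤ η) (hη : η < 1 / 120)
    (h1 : (Nat.card {q : G × G // f (q.1 * q.2) ≠ op (f q.1) (f q.2)} : ℝ) ≤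
      η * (Nat.card G : ℝ) ^ 2)
    (h2 : ∀ H : Subgroup G, H ≠ ⊥ → ∃ x ∈ H, ∃ y ∈ H, x ≠ y ∧
      (Nat.card {u : G // f (x * u) = f (y * u)} : ℝ) ≤ (Nat.card G : ℝ) / 2) :
    ∃ (star : Γ → Γ → Γ) (e : Γ) (inv : Γ → Γ),
      (∀ a b c : Γ, star (star a b) c = star a (star b c)) ∧
      (∀ a, star e a = a) ∧ (∀ a, star a e = a) ∧
      (∀ a, star (inv a) a = e) ∧
      (∃ φ : G → Γ, Function.Bijective φ ∧ ∀ x y, φ (x * y) = star (φ x) (φ y)) ∧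
      (Nat.card {q : Γ × Γ // op q.1 q.2 ≠ star q.1 q.2} : ℝ) ≤
        46 * η * (Nat.card G : ℝ) ^ 2 := by
  classical
  letI := Fintype.ofFinite G
  letI := Fintype.ofFinite Γ
  set n := Fintype.card G with hn
  have hn0 : 0 < n := Fintype.card_pos
  have hn0R : (0:ℝ) < n := by exact_mod_cast hn0
  have hnR : (1:ℝ) ≤ n := by exact_mod_cast hn0
  have hNG : (Nat.card G : ℝ) = (n : ℝ) := by rw [Nat.card_eq_fintype_card]
  have hnΓ : Fintype.card Γ = n := by
    have h := hcard
    rw [Nat.card_eq_fintype_card, Nat.card_eq_fintype_card] at h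
    exact h.trans hn.symm
  -- the bad-pairs bound
  have hP : ((Pbad op f).card : ℝ) ≤ η * (n:ℝ) ^ 2 := by
    calc ((Pbad op f).card : ℝ)
        = (Nat.card {q : G × G // f (q.1 * q.2) ≠ op (f q.1) (f q.2)} : ℝ) := by
          rw [nat_card_eq_Pbad]
      _ ≤ η * (Nat.card G : ℝ) ^ 2 := h1
      _ = η * (n:ℝ) ^ 2 := by rw [hNG]
  -- real version of the key counting lemma
  have lemNR : ∀ a b : G, ((n:ℝ) - Nf f a b) * Nf f a b ≤ 2 * (η * (n:ℝ)^2) := by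
    intro a b
    have h := lemN op f a b
    have hle := Nf_le f a b
    have h' : ((n - Nf f a b : ℕ) : ℝ) * ((Nf f a b : ℕ) : ℝ)
        ≤ 2 * ((Pbad op f).card : ℝ) := by exact_mod_cast h
    rw [Nat.cast_sub hle] at h'
    linarith
  -- self-improvement
  have improve : ∀ c : G, (n : ℝ) < 2 * (Nf f c 1 : ℝ) → (n:ℝ) - 4*η*(n:ℝ) ≤ (Nf f c 1 : ℝ) := by
    intro c hc
    have h := lemNR c 1
    have hle : ((Nf f c 1 : ℕ) : ℝ) ≤ (n:ℝ) := by exact_mod_cast Nf_le f c 1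
    have h₁ : (0:ℝ) ≤ ((n:ℝ) - Nf f c 1) * (2 * (Nf f c 1 : ℝ) - n) :=
      mul_nonneg (by linarith) (by linarith)
    nlinarith [hn0R]
  -- the subgroup of popular translations
  let K : Subgroup G :=
    { carrier := {c : G | (n:ℝ) < 2 * (Nf f c 1 : ℝ)},
      one_mem' := by
        simp only [Set.mem_setOf_eq, Nf_one_one]
        rw [← hn]
        linarith
      inv_mem' := by
        intro c hc
        simp only [Set.mem_setOf_eq] at hc ⊢
        have heq : Nf f c⁻¹ 1 = Nf f c 1 := by
          have h1 := Nf_right_inv f c⁻¹ 1 c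
          rw [inv_mul_cancel, one_mul] at h1
          rw [← h1, Nf_symm]
        rwa [heq]
      mul_mem' := by
        intro c d hc hd
        simp only [Set.mem_setOf_eq] at hc hd ⊢
        have ic := improve c hc
        have idd := improve d hd
        have htri := Nf_triangle f (c*d) d 1
        have hcd : Nf f (c*d) d = Nf f c 1 := by
          have h1 := Nf_right_inv f c 1 d
          rwa [one_mul] at h1
        rw [hcd] at htri
        have hcast : (Nf f c 1 : ℝ) + (Nf f d 1 : ℝ) ≤ (Nf f (c*d) 1 : ℝ) + (n:ℝ) := by
          exact_mod_cast htri
        nlinarith [hn0R] }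
  have hmemK : ∀ c : G, c ∈ K ↔ (n:ℝ) < 2 * (Nf f c 1 : ℝ) := fun c => Iff.rfl
  -- K is trivial
  have hKbot : K = ⊥ := by
    by_contra hne
    obtain ⟨x, hx, y, hy, hxy, hcard2⟩ := h2 K hne
    have hmem : x * y⁻¹ ∈ K := K.mul_mem hx (K.inv_mem hy)
    have h3 : (n:ℝ) < 2 * (Nf f (x*y⁻¹) 1 : ℝ) := (hmemK _).mp hmem
    have h4 : Nf f (x*y⁻¹) 1 = Nf f x y := by
      have h5 := Nf_right_inv f (x*y⁻¹) 1 y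
      rw [inv_mul_cancel_right, one_mul] at h5
      exact h5.symm
    have h6 : ((Nf f x y : ℕ) : ℝ) ≤ (n:ℝ)/2 := by
      rw [← nat_card_eq_Nf]
      rw [hNG] at hcard2
      exact hcard2
    rw [h4] at h3
    linarith
  have half : ∀ c : G, c ≠ 1 → 2 * (Nf f c 1 : ℝ) ≤ (n:ℝ) := by
    intro c hc
    by_contra h
    push_neg at h
    have hcK : c ∈ K := (hmemK c).mpr h
    rw [hKbot, Subgroup.mem_bot] at hcK
    exact hc hcK
  -- the bad set B
  set B : Finset G := univ.filter (fun x => (n:ℝ) < 4 * (ef op f x : ℝ)) with hBdef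
  have hB : (B.card : ℝ) * n ≤ 4 * (η * (n:ℝ)^2) := by
    have hb1 : ∀ x ∈ B, (n:ℝ) ≤ 4 * (ef op f x : ℝ) := by
      intro x hx
      rw [hBdef, mem_filter] at hx
      exact le_of_lt hx.2
    have hb2 : (B.card : ℝ) * n ≤ ∑ x ∈ B, 4 * (ef op f x : ℝ) := by
      calc (B.card : ℝ) * n = ∑ _x ∈ B, (n:ℝ) := by
            rw [Finset.sum_const, nsmul_eq_mul]
        _ ≤ _ := Finset.sum_le_sum hb1
    have hb3 : ∑ x ∈ B, 4 * (ef op f x : ℝ) ≤ 4 * ((Pbad op f).card : ℝ) := by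
      rw [← Finset.mul_sum]
      have hb4 : ∑ x ∈ B, (ef op f x : ℝ) ≤ ∑ x : G, (ef op f x : ℝ) :=
        Finset.sum_le_sum_of_subset_of_nonneg (subset_univ _) (fun _ _ _ => by positivity)
      have hb5 : ∑ x : G, (ef op f x : ℝ) = ((Pbad op f).card : ℝ) := by
        rw [← Nat.cast_sum, sum_ef]
      linarith
    linarith
  -- f is injective off B
  have hinj : Set.InjOn f {x : G | x ∉ B} := by
    intro a ha b hb hfab
    by_contra hne
    have hc1 : a * b⁻¹ ≠ 1 := by
      simpa [mul_inv_eq_one] using hne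
    have h4 : Nf f (a*b⁻¹) 1 = Nf f a b := by
      have h5 := Nf_right_inv f (a*b⁻¹) 1 b
      rw [inv_mul_cancel_right, one_mul] at h5
      exact h5.symm
    have h5 : 2 * ((Nf f a b : ℕ) : ℝ) ≤ (n:ℝ) := by
      rw [← h4]; exact half _ hc1
    have h6 := lemNR a b
    have h7 := Nf_ge op f a b hfab
    have h7R : (n:ℝ) ≤ (Nf f a b : ℝ) + (ef op f a : ℝ) + (ef op f b : ℝ) := by
      exact_mod_cast h7
    have ha' : ¬ ((n:ℝ) < 4 * (ef op f a : ℝ)) := by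
      have := ha
      simp only [Set.mem_setOf_eq, hBdef, mem_filter, mem_univ, true_and, not_lt] at this
      exact not_lt.mpr this
    have hb' : ¬ ((n:ℝ) < 4 * (ef op f b : ℝ)) := by
      have := hb
      simp only [Set.mem_setOf_eq, hBdef, mem_filter, mem_univ, true_and, not_lt] at this
      exact not_lt.mpr this
    push_neg at ha' hb'
    nlinarith [hn0R, sq_nonneg ((n:ℝ))]
  -- build the bijection φ
  set s : Set G := {x : G | x ∉ B} with hsdef
  let e₁ : ↥s ≃ ↥(f '' s) := Equiv.Set.imageOfInjOn f s hinj
  have hc1 : Fintype.card ↥s + Fintype.card ↥(sᶜ) = n := by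
    have h := Fintype.card_congr (Equiv.Set.sumCompl s)
    simpa [Fintype.card_sum] using h
  have hc2 : Fintype.card ↥(f '' s) + Fintype.card ↥((f '' s)ᶜ) = n := by
    have h := Fintype.card_congr (Equiv.Set.sumCompl (f '' s))
    rw [Fintype.card_sum] at h
    rw [h, hnΓ]
  have hc3 : Fintype.card ↥(f '' s) = Fintype.card ↥s := (Fintype.card_congr e₁).symm
  have hc4 : Fintype.card ↥(sᶜ) = Fintype.card ↥((f '' s)ᶜ) := by omega
  let e₂ : ↥(sᶜ) ≃ ↥((f '' s)ᶜ) := Fintype.equivOfCardEq hc4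
  let φ : G ≃ Γ :=
    (Equiv.Set.sumCompl s).symm.trans ((e₁.sumCongr e₂).trans (Equiv.Set.sumCompl (f '' s)))
  have hφ : ∀ x : G, x ∉ B → φ x = f x := by
    intro x hx
    have hxs : x ∈ s := hx
    show (Equiv.Set.sumCompl (f '' s)) ((e₁.sumCongr e₂) ((Equiv.Set.sumCompl s).symm x)) = f x
    rw [Equiv.Set.sumCompl_symm_apply_of_mem hxs]
    simp [e₁, Equiv.Set.imageOfInjOn]
  -- conclude
  refine ⟨fun α β => φ (φ.symm α * φ.symm β), φ 1, fun α => φ (φ.symm α)⁻¹,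
    ?_, ?_, ?_, ?_, ⟨φ, φ.bijective, ?_⟩, ?_⟩
  · intro a b c; simp [mul_assoc]
  · intro a; simp
  · intro a; simp
  · intro a; simp
  · intro x y; simp
  -- the distance bound
  have ecnt : {q : G × G // op (φ q.1) (φ q.2) ≠ φ (q.1 * q.2)} ≃
      {q : Γ × Γ // op q.1 q.2 ≠ φ (φ.symm q.1 * φ.symm q.2)} :=
    Equiv.subtypeEquiv (φ.prodCongr φ) (fun q => by simp)
  have hcnt : (Nat.card {q : Γ × Γ // op q.1 q.2 ≠ φ (φ.symm q.1 * φ.symm q.2)} : ℕ)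
      = (univ.filter fun q : G × G => op (φ q.1) (φ q.2) ≠ φ (q.1 * q.2)).card := by
    rw [← Nat.card_congr ecnt, Nat.card_eq_fintype_card, Fintype.card_subtype]
  have hsub : (univ.filter fun q : G × G => op (φ q.1) (φ q.2) ≠ φ (q.1 * q.2)) ⊆
      Pbad op f ∪ (B ×ˢ univ ∪ univ ×ˢ B ∪ univ.filter fun q : G × G => q.1 * q.2 ∈ B) := by
    intro q hq
    simp only [mem_filter, mem_univ, true_and] at hq
    rw [mem_union]
    by_cases hq1 : q.1 ∈ B
    · right; rw [mem_union]; left; rw [mem_union]; left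
      exact mem_product.mpr ⟨hq1, mem_univ _⟩
    by_cases hq2 : q.2 ∈ B
    · right; rw [mem_union]; left; rw [mem_union]; right
      exact mem_product.mpr ⟨mem_univ _, hq2⟩
    by_cases hq3 : q.1 * q.2 ∈ B
    · right; rw [mem_union]; right
      exact mem_filter.mpr ⟨mem_univ _, hq3⟩
    left
    rw [hφ _ hq1, hφ _ hq2, hφ _ hq3] at hq
    simp only [Pbad, mem_filter, mem_univ, true_and]
    exact fun h => hq h.symm
  have hcard5 : ((univ.filter fun q : G × G => op (φ q.1) (φ q.2) ≠ φ (q.1 * q.2)).card : ℝ)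
      ≤ ((Pbad op f).card : ℝ) + 3 * ((B.card : ℝ) * n) := by
    have hu1 := card_le_card hsub
    have hu2 := card_union_le (Pbad op f)
      (B ×ˢ univ ∪ univ ×ˢ B ∪ univ.filter fun q : G × G => q.1 * q.2 ∈ B)
    have hu3 := card_union_le (B ×ˢ (univ : Finset G) ∪ (univ : Finset G) ×ˢ B)
      (univ.filter fun q : G × G => q.1 * q.2 ∈ B)
    have hu4 := card_union_le (B ×ˢ (univ : Finset G)) ((univ : Finset G) ×ˢ B)
    have hp1 : (B ×ˢ (univ : Finset G)).card = B.card * n := by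
      rw [card_product, card_univ]
    have hp2 : ((univ : Finset G) ×ˢ B).card = n * B.card := by
      rw [card_product, card_univ]
    have hp3 : (univ.filter fun q : G × G => q.1 * q.2 ∈ B).card = n * B.card :=
      card_filter_prod_mul B
    have : (univ.filter fun q : G × G => op (φ q.1) (φ q.2) ≠ φ (q.1 * q.2)).card ≤
        (Pbad op f).card + 3 * (B.card * n) := by
      rw [hp1] at hu4
      rw [hp2] at hu4
      rw [hp3] at hu3
      have := hu1.trans hu2
      nlinarith [mul_comm B.card n]
    calc ((univ.filter fun q : G × G => op (φ q.1) (φ q.2) ≠ φ (q.1 * q.2)).card : ℝ)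
        ≤ (((Pbad op f).card + 3 * (B.card * n) : ℕ) : ℝ) := by exact_mod_cast this
      _ = ((Pbad op f).card : ℝ) + 3 * ((B.card : ℝ) * n) := by push_cast; ring
  rw [hcnt, hNG]
  calc ((univ.filter fun q : G × G => op (φ q.1) (φ q.2) ≠ φ (q.1 * q.2)).card : ℝ)
      ≤ ((Pbad op f).card : ℝ) + 3 * ((B.card : ℝ) * n) := hcard5
    _ ≤ η * (n:ℝ)^2 + 3 * (4 * (η * (n:ℝ)^2)) := by linarith
    _ = 13 * η * (n:ℝ)^2 := by ring
    _ ≤ 46 * η * (n:ℝ)^2 := by nlinarith [sq_nonneg ((n:ℝ))]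
end

section
/- Let G be a finite group, (Γ, ∘) a magma, and f : G → Γ a map such that Pr_{x,y∈G}[f(xy) = f(x)∘f(y)] ≥ 1 - η for some η < 1/120. Call x ∈ G well-behaving if Pr_{u∈G}[f(xu) = f(x)∘f(u)] ≥ 4/5 and Pr_{u∈G}[(f(x)∘f(u))∘f(u^{-1}) = f(x)] ≥ 4/5. Then the fraction of elements of G that are not well-behaving is at most 15η. -/
open Finset

private lemma nat_card_subtype_eq' {α : Type*} [Fintype α] (p : α → Prop) [DecidablePred p] :
    Nat.card {a : α // p a} = (Finset.univ.filter p).card := by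
  rw [Nat.card_eq_fintype_card, Fintype.card_subtype]

private lemma fiber_sum' {α β : Type*} [Fintype α] [Fintype β] [DecidableEq α]
    (p : α → β → Prop) [∀ x y, Decidable (p x y)] :
    (Finset.univ.filter (fun q : α × β => p q.1 q.2)).card
      = ∑ x, (Finset.univ.filter (fun u => p x u)).card := by
  rw [Finset.card_eq_sum_card_fiberwise (f := Prod.fst) (t := Finset.univ)
    (fun _ _ => Finset.mem_univ _)]
  refine Finset.sum_congr rfl fun x _ => ?_
  rw [Finset.filter_filter]
  refine Finset.card_nbij' Prod.snd (fun u => (x, u)) ?_ ?_ ?_ ?_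
  · rintro ⟨a, b⟩ hq
    simp only [Finset.coe_filter, Set.mem_setOf_eq, Finset.mem_filter, Finset.mem_univ, true_and] at hq ⊢
    obtain ⟨h, rfl⟩ := hq
    exact h
  · intro u hu
    simp only [Finset.coe_filter, Set.mem_setOf_eq, Finset.mem_filter, Finset.mem_univ, true_and] at hu ⊢
    exact ⟨hu, trivial⟩
  · rintro ⟨a, b⟩ hq
    simp only [Finset.coe_filter, Set.mem_setOf_eq, Finset.mem_filter, Finset.mem_univ, true_and] at hq
    obtain ⟨-, rfl⟩ := hq
    rfl
  · intro u _; rfl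

theorem most_elements_well_behaving {G Γ : Type*} [Group G] [Finite G]
    (op : Γ → Γ → Γ) (f : G → Γ) (η : ℝ) (hη : η < 1 / 120)
    (h1 : (1 - η) * (Nat.card G : ℝ) ^ 2 ≤
      (Nat.card {q : G × G // f (q.1 * q.2) = op (f q.1) (f q.2)} : ℝ)) :
    (Nat.card {x : G //
        ¬ ((4 / 5 : ℝ) * (Nat.card G : ℝ) ≤
              (Nat.card {u : G // f (x * u) = op (f x) (f u)} : ℝ) ∧
            (4 / 5 : ℝ) * (Nat.card G : ℝ) ≤
              (Nat.card {u : G // op (op (f x) (f u)) (f u⁻¹) = f x} : ℝ))} : ℝ)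
      ≤ 15 * η * (Nat.card G : ℝ) := by
  classical
  haveI := Fintype.ofFinite G
  set n : ℕ := Nat.card G with hn
  have hn0 : 0 < n := Nat.card_pos
  have hn0' : (0:ℝ) < n := by exact_mod_cast hn0
  -- bad pair set
  set Bp : Finset (G × G) :=
    univ.filter (fun q : G × G => ¬ f (q.1 * q.2) = op (f q.1) (f q.2)) with hBpdef
  have hBp : (Bp.card : ℝ) ≤ η * (n:ℝ) ^ 2 := by
    have h2 : (univ.filter (fun q : G × G => f (q.1 * q.2) = op (f q.1) (f q.2))).card
        + Bp.card = n ^ 2 := by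
      rw [hBpdef, Finset.card_filter_add_card_filter_not]
      simp [hn, Nat.card_eq_fintype_card, Finset.card_univ, sq]
    have h3 : (1 - η) * (n:ℝ) ^ 2
        ≤ ((univ.filter (fun q : G × G => f (q.1 * q.2) = op (f q.1) (f q.2))).card : ℝ) := by
      rw [← nat_card_subtype_eq']
      exact h1
    have h2' : ((univ.filter (fun q : G × G => f (q.1 * q.2) = op (f q.1) (f q.2))).card : ℝ)
        + (Bp.card : ℝ) = (n:ℝ) ^ 2 := by exact_mod_cast h2
    nlinarith
  -- local bad sets
  set Ab : G → Finset G := fun x => univ.filter (fun u => ¬ f (x * u) = op (f x) (f u)) with hAb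
  set Cb : G → Finset G :=
    fun x => univ.filter (fun u => ¬ f (x * u * u⁻¹) = op (f (x * u)) (f u⁻¹)) with hCb
  set Bb : G → Finset G :=
    fun x => univ.filter (fun u => ¬ op (op (f x) (f u)) (f u⁻¹) = f x) with hBb
  have hAsum : ∑ x, (Ab x).card = Bp.card := by
    rw [hBpdef, fiber_sum' (fun x u => ¬ f (x * u) = op (f x) (f u))]
  have hCsum : ∑ x, (Cb x).card = Bp.card := by
    rw [← fiber_sum' (fun x u => ¬ f (x * u * u⁻¹) = op (f (x * u)) (f u⁻¹))]
    refine Finset.card_nbij' (fun q => (q.1 * q.2, q.2⁻¹)) (fun q => (q.1 * q.2, q.2⁻¹))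
      ?_ ?_ ?_ ?_
    · rintro ⟨a, b⟩ hq
      simp only [Finset.mem_filter, Finset.mem_univ, true_and, hBpdef] at hq ⊢
      simpa using hq
    · rintro ⟨a, b⟩ hq
      simp only [Finset.mem_filter, Finset.mem_univ, true_and, hBpdef] at hq ⊢
      simpa using hq
    · rintro ⟨a, b⟩ _
      simp
    · rintro ⟨a, b⟩ _
      simp
  have hBsub : ∀ x, (Bb x).card ≤ (Ab x).card + (Cb x).card := by
    intro x
    have hsub : Bb x ⊆ Ab x ∪ Cb x := by
      intro u hu
      simp only [hBb, Finset.mem_filter, Finset.mem_univ, true_and] at hu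
      simp only [hAb, hCb, Finset.mem_union, Finset.mem_filter, Finset.mem_univ, true_and]
      by_contra hc
      push_neg at hc
      obtain ⟨h1', h2'⟩ := hc
      exact hu (by rw [← h1', ← h2', mul_inv_cancel_right])
    calc (Bb x).card ≤ (Ab x ∪ Cb x).card := Finset.card_le_card hsub
      _ ≤ (Ab x).card + (Cb x).card := Finset.card_union_le _ _
  -- Markov
  have markov : ∀ (g : G → ℕ) (S : Finset G), (∀ x ∈ S, (n:ℝ)/5 < (g x : ℝ)) →
      (S.card : ℝ) * ((n:ℝ)/5) ≤ ∑ x, (g x : ℝ) := by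
    intro g S hS
    calc (S.card : ℝ) * ((n:ℝ)/5) = ∑ _x ∈ S, (n:ℝ)/5 := by
          rw [Finset.sum_const, nsmul_eq_mul]
      _ ≤ ∑ x ∈ S, (g x : ℝ) := Finset.sum_le_sum (fun x hx => (hS x hx).le)
      _ ≤ ∑ x, (g x : ℝ) := Finset.sum_le_sum_of_subset_of_nonneg (Finset.subset_univ S)
          (fun i _ _ => by positivity)
  set N1 : Finset G := univ.filter (fun x => (n:ℝ)/5 < ((Ab x).card : ℝ)) with hN1
  set N2 : Finset G := univ.filter (fun x => (n:ℝ)/5 < ((Bb x).card : ℝ)) with hN2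
  have hN1card : (N1.card : ℝ) ≤ 5 * η * n := by
    have := markov (fun x => (Ab x).card) N1 (fun x hx => by
      simpa [hN1] using (Finset.mem_filter.mp hx).2)
    have hs : ∑ x, (((Ab x).card : ℕ) : ℝ) = (Bp.card : ℝ) := by
      rw [← Nat.cast_sum, hAsum]
    rw [hs] at this
    have h5 : (N1.card : ℝ) * ((n:ℝ)/5) ≤ η * (n:ℝ)^2 := le_trans this hBp
    have h6 : (N1.card : ℝ) * n ≤ 5 * η * n * n := by nlinarith [h5]
    exact le_of_mul_le_mul_right h6 hn0'
  have hN2card : (N2.card : ℝ) ≤ 10 * η * n := by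
    have := markov (fun x => (Bb x).card) N2 (fun x hx => by
      simpa [hN2] using (Finset.mem_filter.mp hx).2)
    have hs : ∑ x, (((Bb x).card : ℕ) : ℝ) ≤ 2 * η * (n:ℝ)^2 := by
      have h6 : ∑ x, (Bb x).card ≤ ∑ x, ((Ab x).card + (Cb x).card) :=
        Finset.sum_le_sum (fun x _ => hBsub x)
      have h7 : ∑ x, ((Ab x).card + (Cb x).card) = 2 * Bp.card := by
        rw [Finset.sum_add_distrib, hAsum, hCsum]; ring
      have h8 : (∑ x, (Bb x).card : ℕ) ≤ 2 * Bp.card := h6.trans_eq h7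
      have h9 : ((∑ x, (Bb x).card : ℕ) : ℝ) ≤ 2 * (Bp.card : ℝ) := by exact_mod_cast h8
      push_cast at h9
      nlinarith [hBp]
    have h5 : (N2.card : ℝ) * ((n:ℝ)/5) ≤ 2 * η * (n:ℝ)^2 := le_trans this hs
    have h6 : (N2.card : ℝ) * n ≤ 10 * η * n * n := by nlinarith [h5]
    exact le_of_mul_le_mul_right h6 hn0'
  -- finish
  rw [nat_card_subtype_eq']
  have hcnt : ∀ (p : G → Prop) [DecidablePred p],
      ((univ.filter p).card : ℝ) + ((univ.filter (fun u => ¬ p u)).card : ℝ) = n := by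
    intro p _
    have := Finset.card_filter_add_card_filter_not (s := (univ : Finset G)) (p := p)
    rw [Finset.card_univ, ← Nat.card_eq_fintype_card, ← hn] at this
    exact_mod_cast this
  have hNsub : (univ.filter (fun x : G =>
      ¬ ((4 / 5 : ℝ) * (n : ℝ) ≤ (Nat.card {u : G // f (x * u) = op (f x) (f u)} : ℝ) ∧
         (4 / 5 : ℝ) * (n : ℝ) ≤
           (Nat.card {u : G // op (op (f x) (f u)) (f u⁻¹) = f x} : ℝ))))
      ⊆ N1 ∪ N2 := by
    intro x hx
    simp only [Finset.mem_filter, Finset.mem_univ, true_and] at hx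
    rw [not_and_or] at hx
    rw [Finset.mem_union, hN1, hN2]
    simp only [Finset.mem_filter, Finset.mem_univ, true_and]
    rcases hx with hx | hx
    · left
      rw [nat_card_subtype_eq'] at hx
      push_neg at hx
      have := hcnt (fun u => f (x * u) = op (f x) (f u))
      simp only [hAb]
      linarith [this, hx]
    · right
      rw [nat_card_subtype_eq'] at hx
      push_neg at hx
      have := hcnt (fun u => op (op (f x) (f u)) (f u⁻¹) = f x)
      simp only [hBb]
      linarith [this, hx]
  calc ((univ.filter (fun x : G =>
      ¬ ((4 / 5 : ℝ) * (n : ℝ) ≤ (Nat.card {u : G // f (x * u) = op (f x) (f u)} : ℝ) ∧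
         (4 / 5 : ℝ) * (n : ℝ) ≤
           (Nat.card {u : G // op (op (f x) (f u)) (f u⁻¹) = f x} : ℝ)))).card : ℝ)
      ≤ ((N1 ∪ N2).card : ℝ) := by exact_mod_cast Finset.card_le_card hNsub
    _ ≤ (N1.card : ℝ) + (N2.card : ℝ) := by exact_mod_cast Finset.card_union_le N1 N2
    _ ≤ 15 * η * n := by linarith
end
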